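/- If R is a (1,β)-BM relation and r = [aba'b'] ∈ R, then replacing r by the two squares [a b_{β+1} a' b'] and [a b a' b_{β+1}⁻¹] yields a (1,β+1)-BM relation; similarly replacing r by [a b_{β+1}⁻¹ a' b'] and [a b a' b_{β+1}] yields a (1,β+1)-BM relation. -/

import Mathlib

open Set

/-- Signed letters: letter index together with a sign (`true` = positive). -/
abbrev V (n : ℕ) := Fin n × Bool

/-- Formal inversion of a signed letter. -/
def iv {n : ℕ} (x : V n) : V n := (x.1, !x.2)

/-- Oriented squares: tuples (a, b, a', b'). -/
abbrev Tup (α β : ℕ) := V α × V β × V α × V β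

/-- The geometric square [aba'b'], as the set of its four representatives. -/
def square {α β : ℕ} (a : V α) (b : V β) (a' : V α) (b' : V β) : Set (Tup α β) :=
  {(a, b, a', b'), (a', b', a, b), (iv a, iv b', iv a', iv b), (iv a', iv b, iv a, iv b')}

/-- The link of a set of geometric squares: the set of (horizontal, vertical)
edges contributed by the corners of the squares. -/
def link {α β : ℕ} (R : Set (Set (Tup α β))) : Set (V α × V β) :=
  {e | ∃ q ∈ R, ∃ t ∈ q, e = (iv t.1, t.2.1)}

/-- An (α,β)-BM relation: a set of α·β geometric squares whose link is the
complete bipartite graph K_{2α,2β}. -/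
def IsBM (α β : ℕ) (R : Set (Set (Tup α β))) : Prop :=
  (∀ q ∈ R, ∃ a b a' b', q = square a b a' b') ∧
  R.ncard = α * β ∧ link R = Set.univ

/-- Embedding of old vertical letters into the enlarged alphabet. -/
def up {β : ℕ} (b : V β) : V (β + 1) := (b.1.castSucc, b.2)

/-- The new vertical letter b_{β+1}. -/
def bn (β : ℕ) : V (β + 1) := (Fin.last β, true)

/-- Embedding of tuples along `up`. -/
def upT {α β : ℕ} (t : Tup α β) : Tup α (β + 1) :=
  (t.1, up t.2.1, t.2.2.1, up t.2.2.2)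

/-- Embedding of a geometric square into the enlarged alphabet. -/
def upSq {α β : ℕ} (q : Set (Tup α β)) : Set (Tup α (β + 1)) := upT '' q

/-- Embedding of a set of geometric squares into the enlarged alphabet. -/
def upR {α β : ℕ} (R : Set (Set (Tup α β))) : Set (Set (Tup α (β + 1))) := upSq '' R

/-- The generator a₁. -/
def a1 : V 1 := (0, true)

/-- ψ_β^{(1)}: adjoin one of the three squares involving only b_{β+1}. -/
def psi1 (β : ℕ) (R : Set (Set (Tup 1 β))) : Set (Set (Set (Tup 1 (β + 1)))) :=
  (fun s => upR R ∪ {s}) ''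
    {square a1 (bn β) (iv a1) (iv (bn β)),
     square a1 (bn β) a1 (iv (bn β)),
     square a1 (bn β) (iv a1) (bn β)}

/-- ψ_β^{(2)}: replace one square [aba'b'] of R by one of the two pairs
{[a b_{β+1} a' b'], [a b a' b_{β+1}⁻¹]} or {[a b_{β+1}⁻¹ a' b'], [a b a' b_{β+1}]}. -/
def psi2 (β : ℕ) (R : Set (Set (Tup 1 β))) : Set (Set (Set (Tup 1 (β + 1)))) :=
  {U | ∃ a b a' b', square a b a' b' ∈ R ∧
    (U = upR (R \ {square a b a' b'}) ∪
        {square a (bn β) a' (up b'), square a (up b) a' (iv (bn β))} ∨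
     U = upR (R \ {square a b a' b'}) ∪
        {square a (iv (bn β)) a' (up b'), square a (up b) a' (bn β)})}

/-- The map ψ_β. -/
def psi (β : ℕ) (R : Set (Set (Tup 1 β))) : Set (Set (Set (Tup 1 (β + 1)))) :=
  psi1 β R ∪ psi2 β R

/-! ### Auxiliary lemmas -/

lemma iv_iv {n : ℕ} (x : V n) : iv (iv x) = x := by simp [iv]

lemma up_iv {β : ℕ} (y : V β) : up (iv y) = iv (up y) := rfl

lemma upT_injective {α β : ℕ} : Function.Injective (upT (α := α) (β := β)) := by
  rintro ⟨x1, y1, x1', y1'⟩ ⟨x2, y2, x2', y2'⟩ hh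
  simp only [upT, up, Prod.mk.injEq, Fin.castSucc_inj] at hh
  obtain ⟨h1, ⟨h2, h3⟩, h4, h5, h6⟩ := hh
  simp_all [Prod.ext_iff]

lemma upSq_injective {α β : ℕ} : Function.Injective (upSq (α := α) (β := β)) :=
  Set.image_injective.mpr upT_injective

lemma upSq_square {α β : ℕ} (x x' : V α) (y y' : V β) :
    upSq (square x y x' y') = square x (up y) x' (up y') := by
  simp [upSq, square, Set.image_insert_eq, Set.image_singleton, upT, up_iv]

lemma edge_mem {α β : ℕ} {R : Set (Set (Tup α β))} {q : Set (Tup α β)} (hq : q ∈ R)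
    {t : Tup α β} (ht : t ∈ q) : (iv t.1, t.2.1) ∈ link R := ⟨q, hq, t, ht, rfl⟩

lemma edges_of_square {α β : ℕ} {R : Set (Set (Tup α β))} {x x' : V α} {y y' : V β}
    (hq : square x y x' y' ∈ R) :
    (iv x, y) ∈ link R ∧ (iv x', y') ∈ link R ∧ (x, iv y') ∈ link R ∧ (x', iv y) ∈ link R := by
  have h1 : (iv x, y) ∈ link R := edge_mem hq (show (x, y, x', y') ∈ _ by simp [square])
  have h2 : (iv x', y') ∈ link R := edge_mem hq (show (x', y', x, y) ∈ _ by simp [square])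
  have h3 : (iv (iv x), iv y') ∈ link R :=
    edge_mem hq (show (iv x, iv y', iv x', iv y) ∈ _ by simp [square])
  have h4 : (iv (iv x'), iv y) ∈ link R :=
    edge_mem hq (show (iv x', iv y, iv x, iv y') ∈ _ by simp [square])
  rw [iv_iv] at h3 h4
  exact ⟨h1, h2, h3, h4⟩

lemma v1_cases (x z : V 1) : x = z ∨ x = iv z := by
  rcases x with ⟨i, s⟩; rcases z with ⟨j, t⟩
  obtain rfl : i = j := Subsingleton.elim i j
  cases s <;> cases t <;> simp [iv]

lemma surgery_main {β : ℕ} (R : Set (Set (Tup 1 β))) (hR : IsBM 1 β R)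
    (a a' : V 1) (b b' : V β) (hm : square a b a' b' ∈ R)
    (n : V (β + 1)) (hn : n.1 = Fin.last β) :
    IsBM 1 (β + 1) (upR (R \ {square a b a' b'}) ∪
      {square a n a' (up b'), square a (up b) a' (iv n)}) := by
  obtain ⟨hsq, hcard, hlink⟩ := hR
  have hs1 : square a n a' (up b') ∈ upR (R \ {square a b a' b'}) ∪
      {square a n a' (up b'), square a (up b) a' (iv n)} := Or.inr (Or.inl rfl)
  have hs2 : square a (up b) a' (iv n) ∈ upR (R \ {square a b a' b'}) ∪
      {square a n a' (up b'), square a (up b) a' (iv n)} := Or.inr (Or.inr rfl)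
  refine ⟨?_, ?_, ?_⟩
  · -- all elements are squares
    rintro q (⟨q0, hq0, rfl⟩ | hq)
    · obtain ⟨x, y, x', y', rfl⟩ := hsq q0 hq0.1
      exact ⟨x, up y, x', up y', (upSq_square x x' y y')⟩
    · rcases hq with rfl | rfl
      · exact ⟨a, n, a', up b', rfl⟩
      · exact ⟨a, up b, a', iv n, rfl⟩
  · -- cardinality
    have hfin : R.Finite := Set.toFinite R
    have hβ : 1 ≤ β := by
      by_contra hc
      have h0 : β = 0 := by omega
      have : R = ∅ := (Set.ncard_eq_zero hfin).mp (by rw [hcard, h0])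
      rw [this] at hm; exact hm
    have hdcard : (R \ {square a b a' b'}).ncard = β - 1 := by
      rw [Set.ncard_diff_singleton_of_mem hm, hcard, one_mul]
    have hupcard : (upR (R \ {square a b a' b'})).ncard = β - 1 := by
      rw [upR, Set.ncard_image_of_injective _ upSq_injective, hdcard]
    have hs1notin : square a n a' (up b') ∉ upR (R \ {square a b a' b'}) := by
      rintro ⟨q0, -, heq⟩
      have ht : (a, n, a', up b') ∈ upSq q0 :=
        heq ▸ (show (a, n, a', up b') ∈ square a n a' (up b') by simp [square])
      obtain ⟨u, -, hu⟩ := ht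
      have h2 := congrArg (fun t : Tup 1 (β + 1) => t.2.1.1) hu
      simp only [upT, up] at h2
      rw [hn] at h2
      exact (Fin.castSucc_lt_last _).ne h2
    have hs2notin : square a (up b) a' (iv n) ∉ upR (R \ {square a b a' b'}) := by
      rintro ⟨q0, -, heq⟩
      have ht : (a, up b, a', iv n) ∈ upSq q0 :=
        heq ▸ (show (a, up b, a', iv n) ∈ square a (up b) a' (iv n) by simp [square])
      obtain ⟨u, -, hu⟩ := ht
      have h2 := congrArg (fun t : Tup 1 (β + 1) => t.2.2.2.1) hu
      simp only [upT, up] at h2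
      have : (iv n).1 = Fin.last β := hn
      rw [this] at h2
      exact (Fin.castSucc_lt_last _).ne h2
    have hne12 : square a n a' (up b') ≠ square a (up b) a' (iv n) := by
      intro he
      have ht : (a, n, a', up b') ∈ square a (up b) a' (iv n) :=
        he ▸ (show (a, n, a', up b') ∈ square a n a' (up b') by simp [square])
      simp only [square, Set.mem_insert_iff, Set.mem_singleton_iff] at ht
      rcases ht with h1 | h1 | h1 | h1
      · have h2 := congrArg (fun t : Tup 1 (β + 1) => t.2.1.1) h1
        simp only [up] at h2
        rw [hn] at h2
        exact (Fin.castSucc_lt_last _).ne h2.symm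
      · have h2 := congrArg (fun t : Tup 1 (β + 1) => t.2.1.2) h1
        simp only [iv] at h2
        simp at h2
      · have h2 := congrArg (fun t : Tup 1 (β + 1) => t.1.2) h1
        simp only [iv] at h2
        simp at h2
      · have h2 := congrArg (fun t : Tup 1 (β + 1) => t.2.1.1) h1
        simp only [iv, up] at h2
        rw [hn] at h2
        exact (Fin.castSucc_lt_last _).ne h2.symm
    have hdisj : Disjoint (upR (R \ {square a b a' b'}))
        {square a n a' (up b'), square a (up b) a' (iv n)} := by
      rw [Set.disjoint_right]
      rintro s (rfl | rfl)
      · exact hs1notin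
      · exact hs2notin
    rw [Set.ncard_union_eq hdisj (Set.toFinite _) (Set.toFinite _), hupcard,
      Set.ncard_pair hne12]
    omega
  · -- link is everything
    apply Set.eq_univ_of_forall
    rintro ⟨x, y⟩
    obtain ⟨e1, e2, e3, e4⟩ := edges_of_square hs1
    obtain ⟨f1, f2, f3, f4⟩ := edges_of_square hs2
    rw [iv_iv] at f3
    rcases Fin.eq_castSucc_or_eq_last y.1 with ⟨j, hj⟩ | hj
    · -- old vertical letter
      have hy : y = up (j, y.2) := Prod.ext hj rfl
      have hxy0 : (x, ((j, y.2) : V β)) ∈ link R := by rw [hlink]; exact Set.mem_univ _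
      obtain ⟨q, hq, t, ht, het⟩ := hxy0
      by_cases hqsq : q = square a b a' b'
      · subst hqsq
        simp only [square, Set.mem_insert_iff, Set.mem_singleton_iff] at ht
        simp only [Prod.mk.injEq] at het
        obtain ⟨hx, hy0⟩ := het
        rcases ht with rfl | rfl | rfl | rfl
        · rw [hy, hx, hy0]; exact f1
        · rw [hy, hx, hy0]; exact e2
        · rw [hy, hx, hy0, iv_iv]; exact e3
        · rw [hy, hx, hy0, iv_iv]; exact f4
      · have hmem : upSq q ∈ upR (R \ {square a b a' b'}) ∪
            {square a n a' (up b'), square a (up b) a' (iv n)} :=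
          Or.inl ⟨q, ⟨hq, hqsq⟩, rfl⟩
        have := edge_mem hmem (show upT t ∈ upSq q from ⟨t, ht, rfl⟩)
        simp only [Prod.mk.injEq] at het
        obtain ⟨hx, hy0⟩ := het
        rw [hy, hx, hy0]
        exact this
    · -- new vertical letter
      have hy : y = n ∨ y = iv n := by
        rcases eq_or_ne y.2 n.2 with hb | hb
        · left; exact Prod.ext (hj.trans hn.symm) hb
        · right
          refine Prod.ext (hj.trans hn.symm) ?_
          show y.2 = !n.2
          cases hy2 : y.2 <;> cases hn2 : n.2 <;> simp_all
      rcases hy with rfl | rfl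
      · rcases v1_cases x a with rfl | rfl
        · exact f3
        · exact e1
      · rcases v1_cases x a' with rfl | rfl
        · exact e4
        · exact f2

/-- Replacing a square [aba'b'] of a (1,β)-BM relation by either of the two pairs
of squares involving the new letter b_{β+1} yields a (1,β+1)-BM relation. -/
theorem surgery_isBM {β : ℕ} (R : Set (Set (Tup 1 β))) (hR : IsBM 1 β R)
    (a a' : V 1) (b b' : V β) (h : square a b a' b' ∈ R) :
    IsBM 1 (β + 1) (upR (R \ {square a b a' b'}) ∪
      {square a (bn β) a' (up b'), square a (up b) a' (iv (bn β))}) ∧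
    IsBM 1 (β + 1) (upR (R \ {square a b a' b'}) ∪
      {square a (iv (bn β)) a' (up b'), square a (up b) a' (bn β)}) := by
  constructor
  · exact surgery_main R hR a a' b b' h (bn β) rfl
  · have := surgery_main R hR a a' b b' h (iv (bn β)) rfl
    rwa [iv_iv] at this
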